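/- For all real numbers t and s with s ≠ 0, and for every inner product g on 𝔫_{t,s} that is compatible with J, the Hermitian structure (J,g) is strong KT if and only if t² = s². -/

import Mathlib

/-- The Chevalley–Eilenberg differential of a `2`-form `F` on a real Lie algebra:
`(dF)(x,y,z) = −F([x,y],z) + F([x,z],y) − F([y,z],x)`. -/
def dTwoForm {L : Type} [LieRing L] (F : L → L → ℝ) (x y z : L) : ℝ :=
  -F ⁅x, y⁆ z + F ⁅x, z⁆ y - F ⁅y, z⁆ x

/-- The Chevalley–Eilenberg differential of a `3`-form `τ` on a real Lie algebra:
`(dτ)(x,y,z,w) = −τ([x,y],z,w) + τ([x,z],y,w) − τ([x,w],y,z) − τ([y,z],x,w)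
 + τ([y,w],x,z) − τ([z,w],x,y)`. -/
def dThreeForm {L : Type} [LieRing L] (τ : L → L → L → ℝ) (x y z w : L) : ℝ :=
  -τ ⁅x, y⁆ z w + τ ⁅x, z⁆ y w - τ ⁅x, w⁆ y z - τ ⁅y, z⁆ x w + τ ⁅y, w⁆ x z - τ ⁅z, w⁆ x y

/-- The Hermitian structure `(J, g)` on a real Lie algebra is strong Kähler with torsion:
the `3`-form `τ(x,y,z) = −(dF)(Jx,Jy,Jz)`, where `F(x,y) = g(Jx,y)` is the fundamental
`2`-form, is closed, i.e. `dτ = 0`. -/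
def IsStrongKT {L : Type} [LieRing L] [LieAlgebra ℝ L] (J : L →ₗ[ℝ] L) (g : L →ₗ[ℝ] L →ₗ[ℝ] ℝ) : Prop :=
  ∀ x y z w : L,
    dThreeForm (fun a b c => -(dTwoForm (fun p q => g (J p) q) (J a) (J b) (J c))) x y z w = 0

/-- Auxiliary multilinear expression: the reduced form of `dτ` when all brackets are central. -/
def Eform {L : Type} [LieRing L] [LieAlgebra ℝ L] (J : L →ₗ[ℝ] L)
    (g : L →ₗ[ℝ] L →ₗ[ℝ] ℝ) (x y z w : L) : ℝ :=
  -(g ⁅J z, J w⁆ ⁅x, y⁆) + g ⁅J y, J w⁆ ⁅x, z⁆ - g ⁅J y, J z⁆ ⁅x, w⁆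
    - g ⁅J x, J w⁆ ⁅y, z⁆ + g ⁅J x, J z⁆ ⁅y, w⁆ - g ⁅J x, J y⁆ ⁅z, w⁆

set_option maxHeartbeats 4000000 in
/-- For all real numbers `t` and `s` with `s ≠ 0`, and for every inner product `g` on `𝔫_{t,s}`
compatible with the complex structure `J`, the Hermitian structure `(J,g)` is strong KT
if and only if `t² = s²`. -/
theorem nts_strongKT_iff (t s : ℝ) (hs : s ≠ 0)
    (L : Type) [LieRing L] [LieAlgebra ℝ L] (e : Module.Basis (Fin 6) ℝ L)
    (h01 : ⁅e 0, e 1⁆ = (-t) • e 4) (h23 : ⁅e 2, e 3⁆ = (-(2*t)) • e 4)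
    (h02 : ⁅e 0, e 2⁆ = (-s) • e 4) (h13 : ⁅e 1, e 3⁆ = s • e 4)
    (h03 : ⁅e 0, e 3⁆ = (-s) • e 5) (h12 : ⁅e 1, e 2⁆ = (-s) • e 5)
    (h04 : ⁅e 0, e 4⁆ = 0) (h05 : ⁅e 0, e 5⁆ = 0)
    (h14 : ⁅e 1, e 4⁆ = 0) (h15 : ⁅e 1, e 5⁆ = 0)
    (h24 : ⁅e 2, e 4⁆ = 0) (h25 : ⁅e 2, e 5⁆ = 0)
    (h34 : ⁅e 3, e 4⁆ = 0) (h35 : ⁅e 3, e 5⁆ = 0)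
    (h45 : ⁅e 4, e 5⁆ = 0)
    (J : L →ₗ[ℝ] L)
    (hJ0 : J (e 0) = e 1) (hJ1 : J (e 1) = -e 0)
    (hJ2 : J (e 2) = e 3) (hJ3 : J (e 3) = -e 2)
    (hJ4 : J (e 4) = e 5) (hJ5 : J (e 5) = -e 4)
    (g : L →ₗ[ℝ] L →ₗ[ℝ] ℝ)
    (hsymm : ∀ x y : L, g x y = g y x)
    (hpos : ∀ x : L, x ≠ 0 → 0 < g x x)
    (hcompat : ∀ x y : L, g (J x) (J y) = g x y) :
    IsStrongKT J g ↔ t ^ 2 = s ^ 2 := by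
  -- reversed bracket table
  have r10 : ⁅e 1, e 0⁆ = t • e 4 := by rw [← lie_skew, h01]; module
  have r20 : ⁅e 2, e 0⁆ = s • e 4 := by rw [← lie_skew, h02]; module
  have r21 : ⁅e 2, e 1⁆ = s • e 5 := by rw [← lie_skew, h12]; module
  have r30 : ⁅e 3, e 0⁆ = s • e 5 := by rw [← lie_skew, h03]; module
  have r31 : ⁅e 3, e 1⁆ = (-s) • e 4 := by rw [← lie_skew, h13]; module
  have r32 : ⁅e 3, e 2⁆ = (2*t) • e 4 := by rw [← lie_skew, h23]; module
  have r40 : ⁅e 4, e 0⁆ = 0 := by rw [← lie_skew, h04]; simp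
  have r41 : ⁅e 4, e 1⁆ = 0 := by rw [← lie_skew, h14]; simp
  have r42 : ⁅e 4, e 2⁆ = 0 := by rw [← lie_skew, h24]; simp
  have r43 : ⁅e 4, e 3⁆ = 0 := by rw [← lie_skew, h34]; simp
  have r50 : ⁅e 5, e 0⁆ = 0 := by rw [← lie_skew, h05]; simp
  have r51 : ⁅e 5, e 1⁆ = 0 := by rw [← lie_skew, h15]; simp
  have r52 : ⁅e 5, e 2⁆ = 0 := by rw [← lie_skew, h25]; simp
  have r53 : ⁅e 5, e 3⁆ = 0 := by rw [← lie_skew, h35]; simp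
  have r54 : ⁅e 5, e 4⁆ = 0 := by rw [← lie_skew, h45]; simp
  have hx : ∀ v : L, v ∈ Submodule.span ℝ (Set.range ⇑e) := by
    intro v; rw [e.span_eq]; trivial
  set S : Submodule ℝ L := Submodule.span ℝ ({e 4, e 5} : Set L) with hSdef
  have he4S : e 4 ∈ S := Submodule.subset_span (by simp)
  have he5S : e 5 ∈ S := Submodule.subset_span (by simp)
  -- all brackets lie in S
  have hbase : ∀ i j : Fin 6, ⁅e i, e j⁆ ∈ S := by
    intro i j
    fin_cases i <;> fin_cases j <;>
      simp only [Fin.reduceFinMk, Fin.isValue, h01, h02, h03, h04, h05, h12, h13, h14, h15, h23, h24, h25, h34, h35, h45,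
        r10, r20, r21, r30, r31, r32, r40, r41, r42, r43, r50, r51, r52, r53, r54, lie_self] <;>
      first
        | exact zero_mem _
        | exact Submodule.smul_mem _ _ he4S
        | exact Submodule.smul_mem _ _ he5S
  have hS : ∀ x y : L, ⁅x, y⁆ ∈ S := by
    have h1 : ∀ (i : Fin 6) (y : L), ⁅e i, y⁆ ∈ S := by
      intro i y
      induction hx y using Submodule.span_induction with
      | mem v hv => obtain ⟨j, rfl⟩ := hv; exact hbase i j
      | zero => simp
      | add a b _ _ ha hb => rw [lie_add]; exact add_mem ha hb
      | smul r a _ ha => rw [lie_smul]; exact Submodule.smul_mem _ _ ha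
    intro x y
    induction hx x using Submodule.span_induction with
    | mem v hv => obtain ⟨i, rfl⟩ := hv; exact h1 i y
    | zero => simp
    | add a b _ _ ha hb => rw [add_lie]; exact add_mem ha hb
    | smul r a _ ha => rw [smul_lie]; exact Submodule.smul_mem _ _ ha
  -- elements of S are central
  have ce4 : ∀ w : L, ⁅e 4, w⁆ = 0 := by
    intro w
    induction hx w using Submodule.span_induction with
    | mem v hv =>
        obtain ⟨j, rfl⟩ := hv
        fin_cases j <;> simp [Fin.reduceFinMk, Fin.isValue, r40, r41, r42, r43, h45]
    | zero => simp
    | add a b _ _ ha hb => rw [lie_add, ha, hb]; simp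
    | smul r a _ ha => rw [lie_smul, ha]; simp
  have ce5 : ∀ w : L, ⁅e 5, w⁆ = 0 := by
    intro w
    induction hx w using Submodule.span_induction with
    | mem v hv =>
        obtain ⟨j, rfl⟩ := hv
        fin_cases j <;> simp [Fin.reduceFinMk, Fin.isValue, r50, r51, r52, r53, r54]
    | zero => simp
    | add a b _ _ ha hb => rw [lie_add, ha, hb]; simp
    | smul r a _ ha => rw [lie_smul, ha]; simp
  have hcent : ∀ c : L, c ∈ S → ∀ w : L, ⁅c, w⁆ = 0 := by
    intro c hc w
    induction hc using Submodule.span_induction with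
    | mem v hv =>
        rcases Set.mem_insert_iff.mp hv with rfl | hv
        · exact ce4 w
        · rw [Set.mem_singleton_iff] at hv; subst hv; exact ce5 w
    | zero => simp
    | add a b _ _ ha hb => rw [add_lie, ha, hb]; simp
    | smul r a _ ha => rw [smul_lie, ha]; simp
  have hJS : ∀ c : L, c ∈ S → J c ∈ S := by
    intro c hc
    induction hc using Submodule.span_induction with
    | mem v hv =>
        rcases Set.mem_insert_iff.mp hv with rfl | hv
        · rw [hJ4]; exact he5S
        · rw [Set.mem_singleton_iff] at hv; subst hv; rw [hJ5]; exact neg_mem he4S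
    | zero => rw [map_zero]; exact zero_mem _
    | add a b _ _ ha hb => rw [map_add]; exact add_mem ha hb
    | smul r a _ ha => rw [map_smul]; exact Submodule.smul_mem _ _ ha
  -- the key reduction of dτ
  have hτ : ∀ a b c d : L,
      -(dTwoForm (fun p q => g (J p) q) (J ⁅a, b⁆) (J c) (J d)) = g ⁅J c, J d⁆ ⁅a, b⁆ := by
    intro a b c d
    have h1 : ⁅J ⁅a, b⁆, J c⁆ = 0 := hcent _ (hJS _ (hS a b)) _
    have h2 : ⁅J ⁅a, b⁆, J d⁆ = 0 := hcent _ (hJS _ (hS a b)) _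
    simp only [dTwoForm, h1, h2, map_zero, LinearMap.zero_apply]
    rw [hcompat]
    ring
  have hred : ∀ x y z w : L,
      dThreeForm (fun a b c => -(dTwoForm (fun p q => g (J p) q) (J a) (J b) (J c))) x y z w
        = Eform J g x y z w := by
    intro x y z w
    simp only [dThreeForm, Eform]
    rw [hτ x y z w, hτ x z y w, hτ x w y z, hτ y z x w, hτ y w x z, hτ z w x y]
  -- inner products among e4, e5
  have hg55 : g (e 5) (e 5) = g (e 4) (e 4) := by rw [← hcompat (e 4) (e 4), hJ4]
  have hg45 : g (e 4) (e 5) = 0 := by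
    have h := hcompat (e 4) (e 5)
    rw [hJ4, hJ5, map_neg] at h
    rw [hsymm (e 5) (e 4)] at h
    linarith
  have hg54 : g (e 5) (e 4) = 0 := by rw [hsymm]; exact hg45
  have hgpos : 0 < g (e 4) (e 4) := hpos _ (e.ne_zero 4)
  constructor
  · intro H
    have h0 := H (e 0) (e 1) (e 2) (e 3)
    rw [hred] at h0
    simp only [Eform, hJ0, hJ1, hJ2, hJ3, lie_neg, neg_lie,
      h01, h02, h03, h12, h13, h23, r10, r20, r21, r30, r31, r32,
      map_smul, map_neg, LinearMap.smul_apply, LinearMap.neg_apply, smul_eq_mul,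
      hg55, hg45, hg54, neg_neg] at h0
    have h1 : (s ^ 2 - t ^ 2) * g (e 4) (e 4) = 0 := by ring_nf; ring_nf at h0; linarith
    rcases mul_eq_zero.mp h1 with h | h
    · linarith
    · exact absurd h (ne_of_gt hgpos)
  · intro ht
    have huv : t ^ 2 * g (e 4) (e 4) = s ^ 2 * g (e 4) (e 4) := by rw [ht]
    have hcent' : ∀ c : L, c ∈ S → ∀ w : L, ⁅w, c⁆ = 0 := by
      intro c hc w; rw [← lie_skew, hcent c hc w, neg_zero]
    have Ecent : ∀ c : L, c ∈ S → ∀ y z w : L,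
        Eform J g c y z w = 0 ∧ Eform J g y c z w = 0 ∧ Eform J g y z c w = 0 ∧
          Eform J g y z w c = 0 := by
      intro c hc y z w
      have hJc := hJS _ hc
      refine ⟨?_, ?_, ?_, ?_⟩ <;>
        simp [Eform, hcent _ hc, hcent _ hJc, hcent' _ hc, hcent' _ hJc]
    have hES : ∀ m : Fin 6, 4 ≤ m.val → e m ∈ S := by
      intro m hm
      rcases (show m = 4 ∨ m = 5 by omega) with rfl | rfl
      · exact he4S
      · exact he5S
    have key : ∀ i j k l : Fin 6, Eform J g (e i) (e j) (e k) (e l) = 0 := by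
      intro i j k l
      by_cases hi : 4 ≤ i.val
      · exact (Ecent _ (hES i hi) _ _ _).1
      by_cases hj : 4 ≤ j.val
      · exact (Ecent _ (hES j hj) _ _ _).2.1
      by_cases hk : 4 ≤ k.val
      · exact (Ecent _ (hES k hk) _ _ _).2.2.1
      by_cases hl : 4 ≤ l.val
      · exact (Ecent _ (hES l hl) _ _ _).2.2.2
      rcases (show i = 0 ∨ i = 1 ∨ i = 2 ∨ i = 3 by omega) with rfl | rfl | rfl | rfl <;>
      rcases (show j = 0 ∨ j = 1 ∨ j = 2 ∨ j = 3 by omega) with rfl | rfl | rfl | rfl <;>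
      rcases (show k = 0 ∨ k = 1 ∨ k = 2 ∨ k = 3 by omega) with rfl | rfl | rfl | rfl <;>
      rcases (show l = 0 ∨ l = 1 ∨ l = 2 ∨ l = 3 by omega) with rfl | rfl | rfl | rfl <;>
        simp only [Eform, hJ0, hJ1, hJ2, hJ3, lie_neg, neg_lie, lie_self,
          h01, h02, h03, h12, h13, h23, r10, r20, r21, r30, r31, r32,
          map_smul, map_neg, map_zero, LinearMap.smul_apply, LinearMap.neg_apply,
          LinearMap.zero_apply, smul_eq_mul, hg55, hg45, hg54, neg_neg, neg_zero,
          mul_zero, zero_mul, add_zero, zero_add, sub_zero, zero_sub, sub_self, neg_mul,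
          mul_neg] <;>
        linarith [huv]
    have l1 : ∀ (i j k : Fin 6) (w : L), Eform J g (e i) (e j) (e k) w = 0 := by
      intro i j k w
      induction hx w using Submodule.span_induction with
      | mem v hv => obtain ⟨l, rfl⟩ := hv; exact key i j k l
      | zero => simp [Eform]
      | add a b _ _ ha hb =>
          simp only [Eform, lie_add, add_lie, map_add, LinearMap.add_apply] at ha hb ⊢
          linarith
      | smul r a _ ha =>
          simp only [Eform, lie_smul, smul_lie, map_smul, LinearMap.smul_apply,
            smul_eq_mul] at ha ⊢
          linear_combination r * ha
    have l2 : ∀ (i j : Fin 6) (z w : L), Eform J g (e i) (e j) z w = 0 := by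
      intro i j z w
      induction hx z using Submodule.span_induction with
      | mem v hv => obtain ⟨k, rfl⟩ := hv; exact l1 i j k w
      | zero => simp [Eform]
      | add a b _ _ ha hb =>
          simp only [Eform, lie_add, add_lie, map_add, LinearMap.add_apply] at ha hb ⊢
          linarith
      | smul r a _ ha =>
          simp only [Eform, lie_smul, smul_lie, map_smul, LinearMap.smul_apply,
            smul_eq_mul] at ha ⊢
          linear_combination r * ha
    have l3 : ∀ (i : Fin 6) (y z w : L), Eform J g (e i) y z w = 0 := by
      intro i y z w
      induction hx y using Submodule.span_induction with
      | mem v hv => obtain ⟨j, rfl⟩ := hv; exact l2 i j z w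
      | zero => simp [Eform]
      | add a b _ _ ha hb =>
          simp only [Eform, lie_add, add_lie, map_add, LinearMap.add_apply] at ha hb ⊢
          linarith
      | smul r a _ ha =>
          simp only [Eform, lie_smul, smul_lie, map_smul, LinearMap.smul_apply,
            smul_eq_mul] at ha ⊢
          linear_combination r * ha
    have l4 : ∀ x y z w : L, Eform J g x y z w = 0 := by
      intro x y z w
      induction hx x using Submodule.span_induction with
      | mem v hv => obtain ⟨i, rfl⟩ := hv; exact l3 i y z w
      | zero => simp [Eform]
      | add a b _ _ ha hb =>
          simp only [Eform, lie_add, add_lie, map_add, LinearMap.add_apply] at ha hb ⊢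
          linarith
      | smul r a _ ha =>
          simp only [Eform, lie_smul, smul_lie, map_smul, LinearMap.smul_apply,
            smul_eq_mul] at ha ⊢
          linear_combination r * ha
    intro x y z w
    rw [hred]
    exact l4 x y z w
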